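/- For every n-element poset P whose maximum antichain has size at most a ≥ 1, there exists a family S ⊆ 2^[n] of size at most p(n) · a · (n/a + 1)^a (where p(n) is the number of integer partitions of n), depending only on n and a, such that P embeds as an induced subposet of (S, ⊆). More precisely, there exists a single family S of this size such that every n-element poset with no antichain of size a+1 embeds into (S, ⊆). -/

import Mathlib

open Finset

theorem my_dilworth {α : Type*} [PartialOrder α] [DecidableEq α] :
    ∀ (N : ℕ) (S : Finset α), S.card ≤ N → ∀ (a : ℕ),
    (∀ A : Finset α, A ⊆ S → IsAntichain (· ≤ ·) (A : Set α) → A.card ≤ a) →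
    ∃ C : ℕ → Finset α, (∀ i, IsChain (· ≤ ·) ((C i : Set α))) ∧ ∀ x ∈ S, ∃ i < a, x ∈ C i := by
  intro N
  induction N with
  | zero =>
    intro S hcard a _
    refine ⟨fun _ => ∅, fun i => by simp [IsChain, Set.pairwise_empty], ?_⟩
    have : S = ∅ := card_eq_zero.mp (Nat.le_zero.mp hcard)
    simp [this]
  | succ N ih =>
    intro S hcard a hA
    classical
    by_cases hS : S.Nonempty
    swap
    · refine ⟨fun _ => ∅, fun i => by simp [IsChain, Set.pairwise_empty], ?_⟩
      rw [not_nonempty_iff_eq_empty] at hS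
      simp [hS]
    obtain ⟨m, hmS, hmax⟩ := S.exists_maximal hS
    have ha1 : 1 ≤ a := by
      have := hA {m} (by simpa) (by simp [IsAntichain, Set.pairwise_singleton])
      simpa using this
    set S' := S.erase m with hS'def
    have hmS' : m ∉ S' := notMem_erase _ _
    have hS'S : S' ⊆ S := erase_subset _ _
    have hcard' : S'.card ≤ N := by
      have h1 : S'.card = S.card - 1 := by rw [hS'def]; exact card_erase_of_mem hmS
      have h2 : 1 ≤ S.card := card_pos.mpr hS
      omega
    by_cases hex : ∃ A : Finset α, A ⊆ S' ∧ IsAntichain (· ≤ ·) (A : Set α) ∧ A.card = a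
    swap
    · -- easy case : all antichains in S' have size ≤ a - 1
      obtain ⟨C', hch', hcov'⟩ := ih S' hcard' (a - 1) (by
        intro A hAS hanti
        have h1 := hA A (hAS.trans hS'S) hanti
        have h2 : A.card ≠ a := fun h => hex ⟨A, hAS, hanti, h⟩
        omega)
      refine ⟨fun i => if i < a - 1 then C' i else {m}, ?_, ?_⟩
      · intro i
        by_cases h : i < a - 1
        · simpa [h] using hch' i
        · simp [h, IsChain, Set.pairwise_singleton]
      · intro x hx
        by_cases hxm : x = m
        · exact ⟨a - 1, by omega, by simp [hxm]⟩
        · obtain ⟨i, hi, hxi⟩ := hcov' x (mem_erase.mpr ⟨hxm, hx⟩)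
          exact ⟨i, by omega, by simp [hi, hxi]⟩
    · -- hard case
      obtain ⟨A₀, hA₀S, hA₀anti, hA₀card⟩ := hex
      obtain ⟨C', hch', hcov'⟩ := ih S' hcard' a
        (fun A hAS hanti => hA A (hAS.trans hS'S) hanti)
      -- disjointify the chains
      set D : ℕ → Finset α := fun i => (C' i ∩ S') \ (Finset.range i).biUnion C' with hDdef
      have hDS' : ∀ i, D i ⊆ S' := fun i => (sdiff_subset).trans inter_subset_right
      have hDch : ∀ i, IsChain (· ≤ ·) ((D i : Set α)) := by
        intro i
        apply IsChain.mono ?_ (hch' i)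
        intro x hx
        simp only [hDdef, coe_sdiff, coe_inter, Set.mem_diff, Set.mem_inter_iff, mem_coe] at hx
        exact hx.1.1
      have hDdisj : ∀ i j, i < j → ∀ x, x ∈ D i → x ∈ D j → False := by
        intro i j hij x hxi hxj
        simp only [hDdef, mem_sdiff, mem_inter, mem_biUnion, mem_range] at hxi hxj
        exact hxj.2 ⟨i, hij, hxi.1.1⟩
      have hDcov : ∀ x ∈ S', ∃ i < a, x ∈ D i := by
        intro x hx
        obtain ⟨i, hi, hxi⟩ := hcov' x hx
        have hex2 : ∃ j, x ∈ C' j := ⟨i, hxi⟩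
        set j := Nat.find hex2 with hj
        refine ⟨j, lt_of_le_of_lt (Nat.find_le hxi) hi, ?_⟩
        simp only [hDdef, mem_sdiff, mem_inter, mem_biUnion, mem_range]
        exact ⟨⟨Nat.find_spec hex2, hx⟩, fun ⟨k, hk, hxk⟩ => Nat.find_min hex2 hk hxk⟩
      -- representatives of maximum antichains
      have hrep : ∀ A : Finset α, A ⊆ S' → IsAntichain (· ≤ ·) (A : Set α) → A.card = a →
          ∀ i < a, ∃ x, A ∩ D i = {x} := by
        intro A hAS hanti hAcard i hia
        have hle1 : ∀ j ∈ Finset.range a, (A ∩ D j).card ≤ 1 := by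
          intro j _
          apply card_le_one.mpr
          intro x hx y hy
          simp only [mem_inter] at hx hy
          by_contra hne
          rcases (hDch j) (by exact_mod_cast hx.2) (by exact_mod_cast hy.2) hne with h | h
          · exact hanti hx.1 hy.1 hne h
          · exact hanti hy.1 hx.1 (Ne.symm hne) h
        have hsub : A ⊆ (Finset.range a).biUnion (fun j => A ∩ D j) := by
          intro x hx
          obtain ⟨j, hj, hxj⟩ := hDcov x (hAS hx)
          exact mem_biUnion.mpr ⟨j, mem_range.mpr hj, mem_inter.mpr ⟨hx, hxj⟩⟩
        have hgea : a ≤ ∑ j ∈ Finset.range a, (A ∩ D j).card := by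
          calc a = A.card := hAcard.symm
          _ ≤ ((Finset.range a).biUnion (fun j => A ∩ D j)).card := card_le_card hsub
          _ ≤ ∑ j ∈ Finset.range a, (A ∩ D j).card := card_biUnion_le
        have hall : ∀ j ∈ Finset.range a, (A ∩ D j).card = 1 := by
          by_contra hcon
          push_neg at hcon
          obtain ⟨j₀, hj₀, hne⟩ := hcon
          have : ∑ j ∈ Finset.range a, (A ∩ D j).card < ∑ _j ∈ Finset.range a, 1 :=
            Finset.sum_lt_sum hle1 ⟨j₀, hj₀, by have := hle1 j₀ hj₀; omega⟩
          simp only [Finset.sum_const, Finset.card_range, smul_eq_mul, mul_one] at this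
          omega
        exact card_eq_one.mp (hall i (mem_range.mpr hia))
      -- the predicate "lies in some maximum antichain of S'"
      set Q : α → Prop := fun x => ∃ B : Finset α,
        B ⊆ S' ∧ IsAntichain (· ≤ ·) (B : Set α) ∧ B.card = a ∧ x ∈ B with hQdef
      have hTmax : ∀ i, i < a → ∃ u, u ∈ D i ∧ Q u ∧ ∀ y ∈ D i, Q y → y ≤ u := by
        intro i hia
        set T : Finset α := (D i).filter Q with hTdef
        have hTne : T.Nonempty := by
          obtain ⟨x, hx⟩ := hrep A₀ hA₀S hA₀anti hA₀card i hia
          have hx1 : x ∈ A₀ ∩ D i := hx ▸ mem_singleton_self x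
          rw [mem_inter] at hx1
          exact ⟨x, mem_filter.mpr ⟨hx1.2, A₀, hA₀S, hA₀anti, hA₀card, hx1.1⟩⟩
        obtain ⟨u, huT, humax⟩ := T.exists_maximal hTne
        rw [mem_filter] at huT
        refine ⟨u, huT.1, huT.2, ?_⟩
        intro y hyD hyQ
        have hyT : y ∈ T := mem_filter.mpr ⟨hyD, hyQ⟩
        by_cases hyu : y = u
        · exact hyu.le
        rcases (hDch i) (by exact_mod_cast hyD) (by exact_mod_cast huT.1) hyu with h | h
        · exact h
        · exact absurd (lt_of_le_of_ne h (Ne.symm hyu)) (fun hlt => hlt.not_ge (humax hyT hlt.le))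
      choose td htD htQ htmax using hTmax
      set t : ℕ → α := fun i => if h : i < a then td i h else m with htdef
      have ht'D : ∀ i (h : i < a), t i ∈ D i := fun i h => by simp only [htdef, dif_pos h]; exact htD i h
      have ht'Q : ∀ i (h : i < a), Q (t i) := fun i h => by simp only [htdef, dif_pos h]; exact htQ i h
      have ht'max : ∀ i (h : i < a), ∀ y ∈ D i, Q y → y ≤ t i := fun i h => by
        simp only [htdef, dif_pos h]; exact htmax i h
      have htS' : ∀ i, i < a → t i ∈ S' := fun i h => hDS' i (ht'D i h)
      have htm : ∀ i, i < a → t i ≠ m := fun i h he => hmS' (he ▸ htS' i h)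
      have hnotmle : ∀ i, i < a → ¬ m ≤ t i := by
        intro i h hle
        exact absurd (lt_of_le_of_ne hle (Ne.symm (htm i h))) (fun hlt => hlt.not_ge (hmax (hS'S (htS' i h)) hlt.le))
      -- distinctness of the t i
      have htinj : ∀ i j, i < a → j < a → t i = t j → i = j := by
        intro i j hi hj he
        by_contra hne
        rcases Nat.lt_or_ge i j with h | h
        · exact hDdisj i j h (t i) (ht'D i hi) (he ▸ ht'D j hj)
        · exact hDdisj j i (by omega) (t j) (ht'D j hj) (he ▸ ht'D i hi)
      -- incomparability of distinct t i, t j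
      have htanti : ∀ i j, i < a → j < a → i ≠ j → ¬ t i ≤ t j := by
        intro i j hi hj hij hle
        obtain ⟨B, hBS, hBanti, hBcard, htjB⟩ := ht'Q j hj
        obtain ⟨r, hr⟩ := hrep B hBS hBanti hBcard i hi
        have hr1 : r ∈ B ∩ D i := hr ▸ mem_singleton_self r
        rw [mem_inter] at hr1
        have hrQ : Q r := ⟨B, hBS, hBanti, hBcard, hr1.1⟩
        have hrle : r ≤ t j := le_trans (ht'max i hi r hr1.2 hrQ) hle
        have hrne : r ≠ t j := by
          intro he
          rcases Nat.lt_or_ge i j with h | h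
          · exact hDdisj i j h r hr1.2 (he ▸ ht'D j hj)
          · exact hDdisj j i (by omega) (t j) (ht'D j hj) (he ▸ hr1.2)
        exact hBanti hr1.1 htjB hrne hrle
      -- m must be comparable with (i.e. above) some t i
      have hcomp : ∃ i₀, i₀ < a ∧ t i₀ ≤ m := by
        by_contra hcon
        push_neg at hcon
        set F : Finset α := insert m ((Finset.range a).image t) with hFdef
        have hFS : F ⊆ S := by
          intro x hx
          rw [hFdef, mem_insert] at hx
          rcases hx with h | h
          · exact h ▸ hmS
          · obtain ⟨i, hi, he⟩ := mem_image.mp h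
            exact hS'S (he ▸ htS' i (mem_range.mp hi))
        have hFanti : IsAntichain (· ≤ ·) (F : Set α) := by
          intro x hx y hy hne hle
          simp only [hFdef, coe_insert, Set.mem_insert_iff, coe_image, Set.mem_image,
            mem_coe, mem_range] at hx hy
          rcases hx with rfl | ⟨i, hi, rfl⟩
          · rcases hy with rfl | ⟨j, hj, rfl⟩
            · exact hne rfl
            · exact hnotmle j hj hle
          · rcases hy with rfl | ⟨j, hj, rfl⟩
            · exact hcon i hi hle
            · exact htanti i j hi hj (fun h => hne (h ▸ rfl)) hle
        have hFcard : F.card = a + 1 := by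
          rw [hFdef, card_insert_of_notMem, card_image_of_injOn]
          · simp
          · intro i hi j hj he
            exact htinj i j (mem_range.mp hi) (mem_range.mp hj) he
          · intro hcontra
            obtain ⟨i, hi, he⟩ := mem_image.mp hcontra
            exact htm i (mem_range.mp hi) he
        have := hA F hFS hFanti
        omega
      obtain ⟨i₀, hi₀, hti₀⟩ := hcomp
      -- the chain K to remove
      set K : Finset α := insert m ((D i₀).filter (· ≤ t i₀)) with hKdef
      have hKS : K ⊆ S := by
        intro x hx
        rw [hKdef, mem_insert] at hx
        rcases hx with rfl | h
        · exact hmS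
        · exact hS'S (hDS' i₀ (mem_filter.mp h).1)
      have hKchain : IsChain (· ≤ ·) (K : Set α) := by
        intro x hx y hy hne
        simp only [hKdef, coe_insert, Set.mem_insert_iff, coe_filter, Set.mem_setOf_eq,
          mem_coe] at hx hy
        rcases hx with rfl | ⟨hxD, hxle⟩
        · rcases hy with rfl | ⟨hyD, hyle⟩
          · exact (hne rfl).elim
          · exact Or.inr (hyle.trans hti₀)
        · rcases hy with rfl | ⟨hyD, hyle⟩
          · exact Or.inl (hxle.trans hti₀)
          · exact (hDch i₀) (by exact_mod_cast hxD) (by exact_mod_cast hyD) hne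
      set S'' : Finset α := S \ K with hS''def
      have hmK : m ∈ K := by rw [hKdef]; exact mem_insert_self _ _
      have hcard'' : S''.card ≤ N := by
        have h1 : S''.card < S.card := by
          apply card_lt_card
          rw [Finset.ssubset_iff_of_subset (sdiff_subset)]
          exact ⟨m, hmS, by simp [hS''def, hmK]⟩
        omega
      have hbound'' : ∀ A : Finset α, A ⊆ S'' → IsAntichain (· ≤ ·) (A : Set α) →
          A.card ≤ a - 1 := by
        intro A hAS'' hanti
        have h1 : A ⊆ S := hAS''.trans sdiff_subset
        have h2 := hA A h1 hanti
        by_contra hcon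
        have hAcard : A.card = a := by omega
        have hAS' : A ⊆ S' := by
          intro x hx
          refine mem_erase.mpr ⟨?_, h1 hx⟩
          intro he
          have := hAS'' hx
          rw [hS''def, mem_sdiff] at this
          exact this.2 (he ▸ hmK)
        obtain ⟨r, hr⟩ := hrep A hAS' hanti hAcard i₀ hi₀
        have hr1 : r ∈ A ∩ D i₀ := hr ▸ mem_singleton_self r
        rw [mem_inter] at hr1
        have hrK : r ∈ K := by
          rw [hKdef, mem_insert]
          exact Or.inr (mem_filter.mpr ⟨hr1.2,
            ht'max i₀ hi₀ r hr1.2 ⟨A, hAS', hanti, hAcard, hr1.1⟩⟩)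
        have := hAS'' hr1.1
        rw [hS''def, mem_sdiff] at this
        exact this.2 hrK
      obtain ⟨C'', hch'', hcov''⟩ := ih S'' hcard'' (a - 1) hbound''
      refine ⟨fun i => if i < a - 1 then C'' i else K, ?_, ?_⟩
      · intro i
        by_cases h : i < a - 1
        · simpa [h] using hch'' i
        · simpa [h] using hKchain
      · intro x hx
        by_cases hxK : x ∈ K
        · exact ⟨a - 1, by omega, by simp [hxK]⟩
        · obtain ⟨i, hi, hxi⟩ := hcov'' x (by rw [hS''def, mem_sdiff]; exact ⟨hx, hxK⟩)
          exact ⟨i, by omega, by simp [hi, hxi]⟩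

open Finset

def myOff (a : ℕ) (c : Fin a → ℕ) (i : Fin a) : ℕ := ∑ j ∈ Finset.Iio i, c j

def myBlock (a : ℕ) (c d : Fin a → ℕ) : Finset ℕ :=
  Finset.univ.biUnion (fun i => Finset.Ico (myOff a c i) (myOff a c i + d i))

theorem myOff_add_le {a : ℕ} (c : Fin a → ℕ) {i j : Fin a} (hij : i < j) :
    myOff a c i + c i ≤ myOff a c j := by
  have h : insert i (Finset.Iio i) ⊆ Finset.Iio j := by
    intro k hk
    rw [mem_insert] at hk
    rcases hk with rfl | hk
    · exact mem_Iio.mpr hij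
    · exact mem_Iio.mpr ((mem_Iio.mp hk).trans hij)
  calc myOff a c i + c i = ∑ k ∈ insert i (Finset.Iio i), c k := by
        rw [Finset.sum_insert (by simp), add_comm]; rfl
  _ ≤ ∑ k ∈ Finset.Iio j, c k := Finset.sum_le_sum_of_subset h
  _ = myOff a c j := rfl

theorem myOff_add_le_sum {a : ℕ} (c : Fin a → ℕ) (i : Fin a) :
    myOff a c i + c i ≤ ∑ j, c j := by
  calc myOff a c i + c i = ∑ k ∈ insert i (Finset.Iio i), c k := by
        rw [Finset.sum_insert (by simp), add_comm]; rfl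
  _ ≤ ∑ k, c k := Finset.sum_le_sum_of_subset (subset_univ _)

theorem myBlock_subset_range {n a : ℕ} (c d : Fin a → ℕ) (hc : ∑ i, c i = n)
    (hd : ∀ i, d i ≤ c i) : myBlock a c d ⊆ Finset.range n := by
  intro x hx
  obtain ⟨i, _, hxi⟩ := mem_biUnion.mp hx
  rw [mem_Ico] at hxi
  rw [mem_range]
  calc x < myOff a c i + d i := hxi.2
  _ ≤ myOff a c i + c i := by have := hd i; omega
  _ ≤ ∑ j, c j := myOff_add_le_sum c i
  _ = n := hc

theorem myBlock_subset_iff {a : ℕ} (c d d' : Fin a → ℕ) (hd : ∀ i, d i ≤ c i)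
    (hd' : ∀ i, d' i ≤ c i) :
    myBlock a c d ⊆ myBlock a c d' ↔ ∀ i, d i ≤ d' i := by
  constructor
  · intro hsub i
    by_cases h0 : d i = 0
    · omega
    have hx : myOff a c i + d i - 1 ∈ myBlock a c d :=
      mem_biUnion.mpr ⟨i, mem_univ i, mem_Ico.mpr (by omega)⟩
    obtain ⟨j, _, hxj⟩ := mem_biUnion.mp (hsub hx)
    rw [mem_Ico] at hxj
    have hji : j = i := by
      by_contra hne
      rcases lt_or_gt_of_ne hne with h | h
      · have h1 := myOff_add_le c h
        have h2 := hd' j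
        omega
      · have h1 := myOff_add_le c h
        have h2 := hd i
        omega
    subst hji
    omega
  · intro h x hx
    obtain ⟨i, _, hxi⟩ := mem_biUnion.mp hx
    rw [mem_Ico] at hxi
    exact mem_biUnion.mpr ⟨i, mem_univ i, mem_Ico.mpr ⟨hxi.1, by have := h i; omega⟩⟩
open Finset

def myCs (n a : ℕ) : Finset (Fin a → ℕ) :=
  (Fintype.piFinset fun _ : Fin a => Finset.range (n+1)).filter
    (fun c => Monotone c ∧ ∑ i, c i = n)

theorem myCs_card_le (n a : ℕ) : (myCs n a).card ≤ Fintype.card (Nat.Partition n) := by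
  classical
  set f : (Fin a → ℕ) → Nat.Partition n := fun c =>
    if h : ((List.ofFn c : Multiset ℕ).filter (fun x => x ≠ 0)).sum = n then
      ⟨(List.ofFn c : Multiset ℕ).filter (fun x => x ≠ 0),
        fun {i} hi => Nat.pos_of_ne_zero (by exact (Multiset.mem_filter.mp hi).2), h⟩
    else default
  have hsum : ∀ c ∈ myCs n a, ((List.ofFn c : Multiset ℕ).filter (fun x => x ≠ 0)).sum = n := by
    intro c hc
    rw [myCs, mem_filter] at hc
    have h1 : ((List.ofFn c : Multiset ℕ).filter (fun x => x ≠ 0)).sum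
        + ((List.ofFn c : Multiset ℕ).filter (fun x => ¬ x ≠ 0)).sum
        = (List.ofFn c : Multiset ℕ).sum := by
      rw [← Multiset.sum_add, Multiset.filter_add_not]
    have h2 : ((List.ofFn c : Multiset ℕ).filter (fun x => ¬ x ≠ 0)).sum = 0 := by
      apply Multiset.sum_eq_zero
      intro x hx
      have := Multiset.of_mem_filter hx
      simpa using this
    have h3 : (List.ofFn c : Multiset ℕ).sum = n := by
      rw [Multiset.sum_coe, List.sum_ofFn]
      exact hc.2.2
    omega
  have hrecover : ∀ c : Fin a → ℕ, (List.ofFn c : Multiset ℕ)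
      = (List.ofFn c : Multiset ℕ).filter (fun x => x ≠ 0)
        + Multiset.replicate (a - ((List.ofFn c : Multiset ℕ).filter (fun x => x ≠ 0)).card) 0 := by
    intro c
    conv_lhs => rw [← Multiset.filter_add_not (fun x => x ≠ 0) (List.ofFn c : Multiset ℕ)]
    congr 1
    rw [Multiset.eq_replicate]
    constructor
    · have h1 : ((List.ofFn c : Multiset ℕ).filter (fun x => x ≠ 0)).card
          + ((List.ofFn c : Multiset ℕ).filter (fun x => ¬ x ≠ 0)).card
          = (List.ofFn c : Multiset ℕ).card := by
        rw [← Multiset.card_add, Multiset.filter_add_not]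
      have h2 : (List.ofFn c : Multiset ℕ).card = a := by
        simp [Multiset.coe_card]
      omega
    · intro b hb
      have := Multiset.of_mem_filter hb
      simpa using this
  apply le_trans (Finset.card_le_card_of_injOn f (fun _ _ => mem_univ _) ?_)
  · exact le_of_eq (Finset.card_univ)
  intro c hc c' hc' hfe
  have hc1 := hc; have hc2 := hc'
  rw [mem_coe, myCs, mem_filter] at hc1 hc2
  simp only [f, dif_pos (hsum c hc), dif_pos (hsum c' hc')] at hfe
  have hfe' : (List.ofFn c : Multiset ℕ).filter (fun x => x ≠ 0)
      = (List.ofFn c' : Multiset ℕ).filter (fun x => x ≠ 0) :=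
    congrArg Nat.Partition.parts hfe
  have hM : (List.ofFn c : Multiset ℕ) = (List.ofFn c' : Multiset ℕ) := by
    rw [hrecover c, hrecover c', hfe']
  have hperm : (List.ofFn c).Perm (List.ofFn c') := Multiset.coe_eq_coe.mp hM
  have heq : List.ofFn c = List.ofFn c' :=
    List.Perm.eq_of_sortedLE hc1.2.1.sortedLE_ofFn hc2.2.1.sortedLE_ofFn hperm
  exact List.ofFn_injective heq

theorem myProd_le (n a : ℕ) (ha : 1 ≤ a) (c : Fin a → ℕ) (hc : ∑ i, c i = n) :
    (∏ i, ((c i : ℝ) + 1)) ≤ ((n : ℝ) / a + 1) ^ a := by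
  have ha0 : (0:ℝ) < a := by exact_mod_cast ha
  set z : Fin a → ℝ := fun i => (c i : ℝ) + 1 with hz
  have hznn : ∀ i ∈ Finset.univ, (0:ℝ) ≤ z i := fun i _ => by positivity
  have key := Real.geom_mean_le_arith_mean (Finset.univ : Finset (Fin a))
    (fun _ => 1) z (fun _ _ => zero_le_one) (by simpa using ha0) hznn
  simp only [Real.rpow_one, one_mul] at key
  have hsw : ∑ _i : Fin a, (1:ℝ) = a := by simp
  rw [hsw] at key
  have hsz : ∑ i, z i = (n : ℝ) + a := by
    simp only [hz, Finset.sum_add_distrib]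
    push_cast [← hc]
    simp
  rw [hsz] at key
  have hrhs : ((n : ℝ) + a) / a = (n : ℝ) / a + 1 := by field_simp
  rw [hrhs] at key
  have hpnn : (0:ℝ) ≤ ∏ i, z i := Finset.prod_nonneg hznn
  have h2 : ((∏ i, z i) ^ ((a:ℝ))⁻¹) ^ a ≤ ((n : ℝ) / a + 1) ^ a :=
    pow_le_pow_left₀ (Real.rpow_nonneg hpnn _) key a
  calc (∏ i, z i) = ((∏ i, z i) ^ ((a:ℝ))⁻¹) ^ a := by
        rw [← Real.rpow_natCast ((∏ i, z i) ^ ((a:ℝ))⁻¹) a, ← Real.rpow_mul hpnn,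
          inv_mul_cancel₀ (ne_of_gt ha0), Real.rpow_one]
  _ ≤ _ := h2

theorem stmt_6 (n a : ℕ) (ha : 1 ≤ a) :
    ∃ 𝒮 : Finset (Finset ℕ),
      (∀ S ∈ 𝒮, S ⊆ Finset.range n) ∧
      (𝒮.card : ℝ) ≤ (Fintype.card (Nat.Partition n) : ℝ) * a * ((n : ℝ) / a + 1) ^ a ∧
      ∀ (P : Type) [Fintype P] [PartialOrder P], Fintype.card P = n →
        (∀ A : Finset P, IsAntichain (· ≤ ·) (A : Set P) → A.card ≤ a) →
        ∃ f : P → Finset ℕ, (∀ x, f x ∈ 𝒮) ∧ ∀ x y : P, x ≤ y ↔ f x ⊆ f y := by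
  classical
  refine ⟨(myCs n a).biUnion
    (fun c => (Fintype.piFinset fun i => Finset.range (c i + 1)).image (myBlock a c)), ?_, ?_, ?_⟩
  · -- subsets of range n
    intro S hS
    obtain ⟨c, hc, hS2⟩ := Finset.mem_biUnion.mp hS
    obtain ⟨d, hd, rfl⟩ := Finset.mem_image.mp hS2
    rw [myCs, Finset.mem_filter] at hc
    refine myBlock_subset_range c d hc.2.2 ?_
    intro i
    have := Fintype.mem_piFinset.mp hd i
    rw [Finset.mem_range] at this
    omega
  · -- cardinality bound
    have h1 : ((myCs n a).biUnion
        (fun c => (Fintype.piFinset fun i => Finset.range (c i + 1)).image (myBlock a c))).card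
        ≤ ∑ c ∈ myCs n a, ∏ i, (c i + 1) := by
      apply le_trans Finset.card_biUnion_le
      apply Finset.sum_le_sum
      intro c _
      apply le_trans Finset.card_image_le
      rw [Fintype.card_piFinset]
      apply le_of_eq
      congr 1
      ext i
      rw [Finset.card_range]
    have h2 : ((∑ c ∈ myCs n a, ∏ i, (c i + 1) : ℕ) : ℝ)
        ≤ (myCs n a).card * ((n : ℝ) / a + 1) ^ a := by
      push_cast
      have : ((myCs n a).card : ℝ) * ((n : ℝ) / a + 1) ^ a
          = ∑ _c ∈ myCs n a, ((n : ℝ) / a + 1) ^ a := by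
        rw [Finset.sum_const, nsmul_eq_mul]
      rw [this]
      apply Finset.sum_le_sum
      intro c hc
      rw [myCs, Finset.mem_filter] at hc
      exact myProd_le n a ha c hc.2.2
    have h3 : (0:ℝ) ≤ ((n : ℝ) / a + 1) ^ a := by positivity
    have h4 : ((myCs n a).card : ℝ) ≤ (Fintype.card (Nat.Partition n) : ℝ) := by
      exact_mod_cast myCs_card_le n a
    calc (((myCs n a).biUnion
          (fun c => (Fintype.piFinset fun i => Finset.range (c i + 1)).image (myBlock a c))).card : ℝ)
        ≤ ((∑ c ∈ myCs n a, ∏ i, (c i + 1) : ℕ) : ℝ) := by exact_mod_cast h1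
      _ ≤ (myCs n a).card * ((n : ℝ) / a + 1) ^ a := h2
      _ ≤ (Fintype.card (Nat.Partition n) : ℝ) * ((n : ℝ) / a + 1) ^ a := by
          exact mul_le_mul_of_nonneg_right h4 h3
      _ ≤ (Fintype.card (Nat.Partition n) : ℝ) * a * ((n : ℝ) / a + 1) ^ a := by
          have h5 : (1:ℝ) ≤ (a:ℝ) := by exact_mod_cast ha
          have h6 : (Fintype.card (Nat.Partition n) : ℝ)
              ≤ (Fintype.card (Nat.Partition n) : ℝ) * a :=
            le_mul_of_one_le_right (Nat.cast_nonneg _) h5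
          exact mul_le_mul_of_nonneg_right h6 h3
  · -- the embedding
    intro P _ _ hPn hPanti
    obtain ⟨C, hch, hcov⟩ := my_dilworth n (Finset.univ : Finset P)
      (le_of_eq (by rw [Finset.card_univ, hPn])) a
      (fun A _ hA => hPanti A hA)
    set E : Fin a → Finset P := fun i => C ↑i \ (Finset.range ↑i).biUnion C with hEdef
    have hEC : ∀ i : Fin a, E i ⊆ C ↑i := fun i => Finset.sdiff_subset
    have hEch : ∀ i : Fin a, IsChain (· ≤ ·) ((E i : Set P)) := by
      intro i
      apply IsChain.mono ?_ (hch ↑i)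
      exact_mod_cast hEC i
    have hEdisj : ∀ i j : Fin a, (i:ℕ) < (j:ℕ) → ∀ x, x ∈ E i → x ∈ E j → False := by
      intro i j hij x hxi hxj
      rw [hEdef, Finset.mem_sdiff] at hxi hxj
      exact hxj.2 (Finset.mem_biUnion.mpr ⟨↑i, Finset.mem_range.mpr hij, hxi.1⟩)
    have hEcov : ∀ x : P, ∃ i : Fin a, x ∈ E i := by
      intro x
      obtain ⟨i, hia, hxi⟩ := hcov x (Finset.mem_univ x)
      have hex : ∃ j, x ∈ C j := ⟨i, hxi⟩
      refine ⟨⟨Nat.find hex, lt_of_le_of_lt (Nat.find_le hxi) hia⟩, ?_⟩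
      rw [hEdef, Finset.mem_sdiff]
      refine ⟨Nat.find_spec hex, fun hcon => ?_⟩
      obtain ⟨k, hk, hxk⟩ := Finset.mem_biUnion.mp hcon
      exact Nat.find_min hex (Finset.mem_range.mp hk) hxk
    have hsum : ∑ i : Fin a, (E i).card = n := by
      have hcover : Finset.univ.biUnion E = (Finset.univ : Finset P) := by
        apply Finset.eq_univ_of_forall
        intro x
        obtain ⟨i, hi⟩ := hEcov x
        exact Finset.mem_biUnion.mpr ⟨i, Finset.mem_univ i, hi⟩
      have hdisj : ∀ i ∈ Finset.univ, ∀ j ∈ Finset.univ, i ≠ j → Disjoint (E i) (E j) := by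
        intro i _ j _ hij
        rw [Finset.disjoint_left]
        intro x hxi hxj
        rcases lt_or_gt_of_ne (fun h : (i:ℕ) = (j:ℕ) => hij (Fin.ext h)) with h | h
        · exact hEdisj i j h x hxi hxj
        · exact hEdisj j i h x hxj hxi
      rw [← Finset.card_biUnion hdisj, hcover, Finset.card_univ, hPn]
    set σ : Equiv.Perm (Fin a) := Tuple.sort (fun i => (E i).card) with hσdef
    set c : Fin a → ℕ := fun i => (E (σ i)).card with hcdef
    have hcmono : Monotone c := Tuple.monotone_sort (fun i => (E i).card)
    have hcsum : ∑ i, c i = n := by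
      rw [hcdef, ← hsum]
      exact Equiv.sum_comp σ (fun i => (E i).card)
    have hcmem : c ∈ myCs n a := by
      rw [myCs, Finset.mem_filter]
      refine ⟨Fintype.mem_piFinset.mpr fun i => Finset.mem_range.mpr ?_, hcmono, hcsum⟩
      have h1 : (E (σ i)).card ≤ Fintype.card P := Finset.card_le_univ _
      rw [hPn] at h1
      have h2 : c i = (E (σ i)).card := rfl
      omega
    set d : P → Fin a → ℕ := fun x i => ((E (σ i)).filter (· ≤ x)).card with hddef
    have hdc : ∀ x i, d x i ≤ c i := fun x i => Finset.card_le_card (Finset.filter_subset _ _)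
    refine ⟨fun x => myBlock a c (d x), ?_, ?_⟩
    · intro x
      refine Finset.mem_biUnion.mpr ⟨c, hcmem, Finset.mem_image.mpr ⟨d x, ?_, rfl⟩⟩
      exact Fintype.mem_piFinset.mpr fun i => Finset.mem_range.mpr (by have := hdc x i; omega)
    · intro x y
      have hmono : ∀ (x y : P), x ≤ y → ∀ j : Fin a,
          ((E j).filter (· ≤ x)).card ≤ ((E j).filter (· ≤ y)).card := by
        intro x y hxy j
        apply Finset.card_le_card
        intro z hz
        rw [Finset.mem_filter] at hz ⊢
        exact ⟨hz.1, hz.2.trans hxy⟩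
      constructor
      · intro hxy
        exact (myBlock_subset_iff c (d x) (d y) (hdc x) (hdc y)).mpr
          (fun i => hmono x y hxy (σ i))
      · intro hsub
        have hall : ∀ j : Fin a, ((E j).filter (· ≤ x)).card ≤ ((E j).filter (· ≤ y)).card := by
          intro j
          have := (myBlock_subset_iff c (d x) (d y) (hdc x) (hdc y)).mp hsub (σ.symm j)
          simpa only [hddef, Equiv.apply_symm_apply] using this
        obtain ⟨j, hxj⟩ := hEcov x
        have hAB : (E j).filter (· ≤ x) ⊆ (E j).filter (· ≤ y) ∨
            (E j).filter (· ≤ y) ⊆ (E j).filter (· ≤ x) := by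
          by_cases hsubAB : (E j).filter (· ≤ x) ⊆ (E j).filter (· ≤ y)
          · exact Or.inl hsubAB
          right
          obtain ⟨u, huA, huB⟩ := Finset.not_subset.mp hsubAB
          rw [Finset.mem_filter] at huA
          intro v hvB
          rw [Finset.mem_filter] at hvB
          rw [Finset.mem_filter]
          refine ⟨hvB.1, ?_⟩
          by_cases huv : u = v
          · refine absurd (Finset.mem_filter.mpr ⟨huA.1, ?_⟩) huB
            rw [huv]; exact hvB.2
          rcases (hEch j) (Finset.mem_coe.mpr huA.1) (Finset.mem_coe.mpr hvB.1) huv with h | h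
          · refine absurd (Finset.mem_filter.mpr ⟨huA.1, ?_⟩) huB
            exact le_trans h hvB.2
          · exact le_trans h huA.2
        have hxA : x ∈ (E j).filter (· ≤ x) := Finset.mem_filter.mpr ⟨hxj, le_refl x⟩
        rcases hAB with h | h
        · exact (Finset.mem_filter.mp (h hxA)).2
        · have hBA : (E j).filter (· ≤ y) = (E j).filter (· ≤ x) :=
            Finset.eq_of_subset_of_card_le h (hall j)
          have hxB : x ∈ (E j).filter (· ≤ y) := by rw [hBA]; exact hxA
          exact (Finset.mem_filter.mp hxB).2
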